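/- Suppose P ≠ ∅ and let n ∈ P. Let ā, b̄, c̄ be pairwise disjoint n-tuples of pairwise distinct elements of M representing pairwise distinct E_n-classes with ā <_n b̄ <_n c̄. Then the partial isomorphism fixing ā pointwise and sending b̄ to c̄ does not extend to an automorphism of any finite substructure of M containing ā, b̄ and c̄. In particular M does not satisfy Hrushovski's extension property. -/

import Mathlib

open FirstOrder Language Structure CategoryTheory

/-- The language `L₀` with a `2n`-ary relation symbol `E_n` for each `n ≥ 1`. -/
def L₀ : FirstOrder.Language where
  Functions := fun _ => Empty
  Relations := fun k => {n : ℕ // 0 < n ∧ k = n + n}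

/-- The relation symbol `E_n`. -/
def Esymb (n : ℕ) (hn : 0 < n) : L₀.Relations (n + n) := ⟨n, hn, rfl⟩

/-- `E_n(x̄, ȳ)` in an `L₀`-structure. -/
def ERel (M : Type*) [L₀.Structure M] (n : ℕ) (hn : 0 < n) (x y : Fin n → M) : Prop :=
  Structure.RelMap (Esymb n hn) (Fin.append x y)

/-- The defining conditions for membership in `K₀`: each `E_n` holds only on pairs of
injective `n`-tuples, is invariant under permuting the entries of each tuple separately,
and induces an equivalence relation on `n`-element subsets. -/
def IsK0Struct (C : Type*) [L₀.Structure C] : Prop :=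
  ∀ (n : ℕ) (hn : 0 < n),
    (∀ x y : Fin n → C, ERel C n hn x y → Function.Injective x ∧ Function.Injective y) ∧
    (∀ (x y : Fin n → C) (σ τ : Equiv.Perm (Fin n)),
        ERel C n hn x y → ERel C n hn (x ∘ σ) (y ∘ τ)) ∧
    (∀ x : Fin n → C, Function.Injective x → ERel C n hn x x) ∧
    (∀ x y : Fin n → C, ERel C n hn x y → ERel C n hn y x) ∧
    (∀ x y z : Fin n → C, ERel C n hn x y → ERel C n hn y z → ERel C n hn x z)

/-- The class `K₀` of finite `L₀`-structures as above. -/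
def K₀ : Set (Bundled L₀.Structure) := {C | Finite C ∧ IsK0Struct C}

/-- The language `L_P`: a `2n`-ary symbol `E_n` for each `n ≥ 1` and a `2n`-ary symbol
`<_n` for each `n ∈ P`. -/
def LP (P : Set ℕ) : FirstOrder.Language where
  Functions := fun _ => Empty
  Relations := fun k => {n : ℕ // 0 < n ∧ k = n + n} ⊕ {n : ℕ // n ∈ P ∧ k = n + n}

/-- The symbol `E_n` of `L_P`. -/
def EsymbP (P : Set ℕ) (n : ℕ) (hn : 0 < n) : (LP P).Relations (n + n) :=
  Sum.inl ⟨n, hn, rfl⟩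

/-- The symbol `<_n` of `L_P`. -/
def LTsymbP (P : Set ℕ) (n : ℕ) (hn : n ∈ P) : (LP P).Relations (n + n) :=
  Sum.inr ⟨n, hn, rfl⟩

/-- `E_n(x̄, ȳ)` in an `L_P`-structure. -/
def ERelP (P : Set ℕ) (M : Type*) [i : (LP P).Structure M] (n : ℕ) (hn : 0 < n)
    (x y : Fin n → M) : Prop :=
  @Structure.RelMap (LP P) M i (n + n) (EsymbP P n hn) (Fin.append x y)

/-- `x̄ <_n ȳ` in an `L_P`-structure. -/
def LTRelP (P : Set ℕ) (M : Type*) [i : (LP P).Structure M] (n : ℕ) (hn : n ∈ P)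
    (x y : Fin n → M) : Prop :=
  @Structure.RelMap (LP P) M i (n + n) (LTsymbP P n hn) (Fin.append x y)

/-- The defining conditions for membership in `K_P`: the `{E_n}`-part satisfies the
`K₀`-conditions, and for `n ∈ P` the relation `<_n` holds only on injective tuples, is
`E_n`-invariant, and induces a strict linear order on `E_n`-classes. -/
def IsKPStruct (P : Set ℕ) (C : Type*) [(LP P).Structure C] : Prop :=
  (∀ (n : ℕ) (hn : 0 < n),
    (∀ x y : Fin n → C, ERelP P C n hn x y → Function.Injective x ∧ Function.Injective y) ∧
    (∀ (x y : Fin n → C) (σ τ : Equiv.Perm (Fin n)),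
        ERelP P C n hn x y → ERelP P C n hn (x ∘ σ) (y ∘ τ)) ∧
    (∀ x : Fin n → C, Function.Injective x → ERelP P C n hn x x) ∧
    (∀ x y : Fin n → C, ERelP P C n hn x y → ERelP P C n hn y x) ∧
    (∀ x y z : Fin n → C, ERelP P C n hn x y → ERelP P C n hn y z → ERelP P C n hn x z)) ∧
  (∀ (n : ℕ) (hn : n ∈ P) (hn0 : 0 < n),
    (∀ x y : Fin n → C, LTRelP P C n hn x y → Function.Injective x ∧ Function.Injective y) ∧
    (∀ x x' y y' : Fin n → C, ERelP P C n hn0 x x' → ERelP P C n hn0 y y' →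
        LTRelP P C n hn x y → LTRelP P C n hn x' y') ∧
    (∀ x y : Fin n → C, LTRelP P C n hn x y → ¬ ERelP P C n hn0 x y) ∧
    (∀ x y z : Fin n → C, LTRelP P C n hn x y → LTRelP P C n hn y z → LTRelP P C n hn x z) ∧
    (∀ x y : Fin n → C, Function.Injective x → Function.Injective y →
        ¬ ERelP P C n hn0 x y → LTRelP P C n hn x y ∨ LTRelP P C n hn y x))

/-- The class `K_P` of finite `L_P`-structures as above. -/
def KP (P : Set ℕ) : Set (Bundled (LP P).Structure) := {C | Finite C ∧ IsKPStruct P C}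

/-- Hrushovski's extension property: every finite family of isomorphisms between finite
substructures extends, inside some finite substructure `F` containing all their domains
and ranges, to automorphisms of `F`. -/
def HEP (L : FirstOrder.Language) (M : Type*) [L.Structure M] : Prop :=
  ∀ (k : ℕ) (S T : Fin k → L.Substructure M),
    (∀ i, Set.Finite (S i : Set M)) → (∀ i, Set.Finite (T i : Set M)) →
    ∀ f : (i : Fin k) → S i ≃[L] T i,
      ∃ F : L.Substructure M, Set.Finite (F : Set M) ∧
        ∃ (hS : ∀ i, S i ≤ F) (_ : ∀ i, T i ≤ F) (g : Fin k → (F ≃[L] F)),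
          ∀ (i : Fin k) (x : M) (hx : x ∈ S i),
            ((g i ⟨x, hS i hx⟩ : F) : M) = ((f i ⟨x, hx⟩ : T i) : M)

section Stage1

open Function Set

lemma comp_append' {α β : Type*} {m k : ℕ} (f : α → β) (x : Fin m → α) (y : Fin k → α) :
    f ∘ Fin.append x y = Fin.append (f ∘ x) (f ∘ y) := by
  funext i
  refine Fin.addCases (fun i => ?_) (fun i => ?_) i <;>
    simp [Fin.append_left, Fin.append_right]

variable {P : Set ℕ} {M : Type*} [(LP P).Structure M]

lemma ERelP_sub (S : (LP P).Substructure M) {m : ℕ} (hm : 0 < m) (x y : Fin m → S) :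
    ERelP P S m hm x y ↔ ERelP P M m hm (fun i => ↑(x i)) (fun i => ↑(y i)) := by
  show RelMap (EsymbP P m hm) (fun i => ((Fin.append x y i : S) : M)) ↔
    RelMap (EsymbP P m hm) (Fin.append (fun i => ((x i : S) : M)) (fun i => ↑(y i)))
  rw [show (fun i => ((Fin.append x y i : S) : M)) =
    Fin.append (fun i => ((x i : S) : M)) (fun i => ((y i : S) : M)) from
      comp_append' (fun (u : S) => (u : M)) x y]

lemma LTRelP_sub (S : (LP P).Substructure M) {m : ℕ} (hm : m ∈ P) (x y : Fin m → S) :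
    LTRelP P S m hm x y ↔ LTRelP P M m hm (fun i => ↑(x i)) (fun i => ↑(y i)) := by
  show RelMap (LTsymbP P m hm) (fun i => ((Fin.append x y i : S) : M)) ↔
    RelMap (LTsymbP P m hm) (Fin.append (fun i => ((x i : S) : M)) (fun i => ↑(y i)))
  rw [show (fun i => ((Fin.append x y i : S) : M)) =
    Fin.append (fun i => ((x i : S) : M)) (fun i => ((y i : S) : M)) from
      comp_append' (fun (u : S) => (u : M)) x y]

def setSub (s : Set M) : (LP P).Substructure M where
  carrier := s
  fun_mem := fun f _ _ => f.elim

lemma setSub_isKP (hage : (LP P).age M = KP P) {s : Set M} (hs : s.Finite) :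
    IsKPStruct P (setSub s : (LP P).Substructure M) := by
  have hcl : Substructure.closure (LP P) s = setSub s :=
    le_antisymm ((Substructure.closure_le).2 (fun x hx => hx))
      (fun x hx => Substructure.subset_closure hx)
  have hfg : (setSub s : (LP P).Substructure M).FG := Substructure.fg_def.2 ⟨s, hs, hcl⟩
  have hmem : (⟨(setSub s : (LP P).Substructure M), inferInstance⟩ :
      Bundled (LP P).Structure) ∈ (LP P).age M :=
    ⟨(Substructure.fg_iff_structure_fg _).1 hfg, ⟨Substructure.subtype _⟩⟩
  rw [hage] at hmem
  exact hmem.2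

lemma M_lt_trans (hage : (LP P).age M = KP P) {m : ℕ} (hm : m ∈ P) (hm0 : 0 < m)
    (x y z : Fin m → M) (h1 : LTRelP P M m hm x y) (h2 : LTRelP P M m hm y z) :
    LTRelP P M m hm x z := by
  set s : Set M := Set.range x ∪ Set.range y ∪ Set.range z with hs
  have hsfin : s.Finite :=
    (((Set.finite_range x).union (Set.finite_range y)).union (Set.finite_range z))
  have hx : ∀ i, x i ∈ (setSub s : (LP P).Substructure M) :=
    fun i => Or.inl (Or.inl ⟨i, rfl⟩)
  have hy : ∀ i, y i ∈ (setSub s : (LP P).Substructure M) :=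
    fun i => Or.inl (Or.inr ⟨i, rfl⟩)
  have hz : ∀ i, z i ∈ (setSub s : (LP P).Substructure M) :=
    fun i => Or.inr ⟨i, rfl⟩
  have hK := (setSub_isKP hage hsfin).2 m hm hm0
  have h1' : LTRelP P (setSub s : (LP P).Substructure M) m hm
      (fun i => ⟨x i, hx i⟩) (fun i => ⟨y i, hy i⟩) := (LTRelP_sub _ hm _ _).2 h1
  have h2' : LTRelP P (setSub s : (LP P).Substructure M) m hm
      (fun i => ⟨y i, hy i⟩) (fun i => ⟨z i, hz i⟩) := (LTRelP_sub _ hm _ _).2 h2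
  exact (LTRelP_sub _ hm _ _).1 (hK.2.2.2.1 _ _ _ h1' h2')

lemma M_lt_irrefl (hage : (LP P).age M = KP P) {m : ℕ} (hm : m ∈ P) (hm0 : 0 < m)
    (x : Fin m → M) (h : LTRelP P M m hm x x) : False := by
  have hsfin : (Set.range x).Finite := Set.finite_range x
  have hx : ∀ i, x i ∈ (setSub (Set.range x) : (LP P).Substructure M) := fun i => ⟨i, rfl⟩
  have hK := setSub_isKP hage hsfin
  have h' : LTRelP P (setSub (Set.range x) : (LP P).Substructure M) m hm
      (fun i => ⟨x i, hx i⟩) (fun i => ⟨x i, hx i⟩) := (LTRelP_sub _ hm _ _).2 h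
  have hinj := ((hK.2 m hm hm0).1 _ _ h').1
  have hE := (hK.1 m hm0).2.2.1 _ hinj
  exact (hK.2 m hm hm0).2.2.1 _ _ h' hE

lemma key_no_auto (hage : (LP P).age M = KP P) {n : ℕ} (hnP : n ∈ P) (hn0 : 0 < n)
    (F : (LP P).Substructure M) (hF : Set.Finite (F : Set M))
    (b c : Fin n → M) (hbF : ∀ l, b l ∈ F)
    (hlt : LTRelP P M n hnP b c)
    (g : F ≃[LP P] F) (hg : ∀ l, ((g ⟨b l, hbF l⟩ : F) : M) = c l) : False := by
  haveI : Finite F := hF.to_subtype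
  let t : ℕ → Fin n → F := fun k l => (fun v => g v)^[k] ⟨b l, hbF l⟩
  have tsucc : ∀ k, t (k + 1) = fun l => g (t k l) := by
    intro k; funext l
    simp only [t, Function.iterate_succ_apply']
  have step : ∀ k, LTRelP P M n hnP (fun l => ↑(t k l)) (fun l => ↑(t (k + 1) l)) := by
    intro k
    induction k with
    | zero =>
      have h0 : (fun l => ((t 0 l : F) : M)) = b := by funext l; rfl
      have h1 : (fun l => ((t 1 l : F) : M)) = c := by
        funext l
        rw [show t 1 l = g (t 0 l) from congrFun (tsucc 0) l]
        exact hg l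
      rw [h0, h1]; exact hlt
    | succ k ih =>
      have ihF : LTRelP P F n hnP (t k) (t (k + 1)) := (LTRelP_sub _ hnP _ _).2 ih
      have hgF : LTRelP P F n hnP (fun l => g (t k l)) (fun l => g (t (k + 1) l)) := by
        unfold LTRelP at ihF ⊢
        rw [show Fin.append (fun l => g (t k l)) (fun l => g (t (k + 1) l)) =
          (fun v => g v) ∘ Fin.append (t k) (t (k + 1)) from
            (comp_append' (fun v => g v) (t k) (t (k + 1))).symm]
        exact (g.map_rel _ _).2 ihF
      have hM := (LTRelP_sub F hnP _ _).1 hgF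
      have e1 : (fun l => ((t (k + 1) l : F) : M)) = fun i => ((g (t k i) : F) : M) := by
        funext l; rw [tsucc k]
      have e2 : (fun l => ((t (k + 2) l : F) : M)) = fun i => ((g (t (k + 1) i) : F) : M) := by
        funext l; rw [tsucc (k + 1)]
      rw [e1, e2]; exact hM
  have chain : ∀ j k, j < k → LTRelP P M n hnP (fun l => ↑(t j l)) (fun l => ↑(t k l)) := by
    intro j k
    induction k with
    | zero => omega
    | succ k ih =>
      intro hjk
      rcases Nat.lt_succ_iff_lt_or_eq.1 hjk with h | h
      · exact M_lt_trans hage hnP hn0 _ _ _ (ih h) (step k)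
      · subst h; exact step j
  obtain ⟨j, k, hne, heq⟩ := Finite.exists_ne_map_eq_of_infinite t
  rcases hne.lt_or_gt with h | h
  · exact M_lt_irrefl hage hnP hn0 _ (heq ▸ chain j k h)
  · exact M_lt_irrefl hage hnP hn0 _ (heq ▸ chain k j h)

end Stage1

section Stage2

open Function Set

def half1 {α : Type*} {m k : ℕ} (hk : k = m + m) (v : Fin k → α) : Fin m → α :=
  fun i => v ⟨i.1, by omega⟩

def half2 {α : Type*} {m k : ℕ} (hk : k = m + m) (v : Fin k → α) : Fin m → α :=
  fun i => v ⟨m + i.1, by omega⟩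

lemma half1_append {α : Type*} {m : ℕ} (x y : Fin m → α) : half1 rfl (Fin.append x y) = x := by
  funext i; exact Fin.append_left x y i

lemma half2_append {α : Type*} {m : ℕ} (x y : Fin m → α) : half2 rfl (Fin.append x y) = y := by
  funext i; exact Fin.append_right x y i

def didx (n : ℕ) : Fin n ⊕ Fin n → ℕ := Sum.elim (fun i => (i : ℕ)) (fun i => n + (i : ℕ))

lemma didx_inj (n : ℕ) : Function.Injective (didx n) := by
  rintro (i | i) (j | j) h <;> simp only [didx, Sum.elim_inl, Sum.elim_inr] at h
  · exact congrArg Sum.inl (Fin.ext h)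
  · exact absurd h (by have := i.isLt; omega)
  · exact absurd h (by have := j.isLt; omega)
  · exact congrArg Sum.inr (Fin.ext (by omega))

def DW (n : ℕ) {m : ℕ} (x : Fin m → Fin n ⊕ Fin n) : ℕ :=
  ∑ k ∈ Finset.image (fun i => didx n (x i)) Finset.univ, 2 ^ k

lemma DW_image_eq (n : ℕ) {m : ℕ} {x y : Fin m → Fin n ⊕ Fin n}
    (h : Set.range x = Set.range y) :
    Finset.image (fun i => didx n (x i)) Finset.univ
      = Finset.image (fun i => didx n (y i)) Finset.univ := by
  apply Finset.coe_injective
  simp only [Finset.coe_image, Finset.coe_univ, Set.image_univ]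
  rw [show (fun i => didx n (x i)) = didx n ∘ x from rfl,
    show (fun i => didx n (y i)) = didx n ∘ y from rfl, Set.range_comp, Set.range_comp, h]

lemma DW_range_eq (n : ℕ) {m : ℕ} {x y : Fin m → Fin n ⊕ Fin n}
    (h : Set.range x = Set.range y) : DW n x = DW n y := by
  unfold DW; rw [DW_image_eq n h]

lemma range_eq_of_DW (n : ℕ) {m : ℕ} {x y : Fin m → Fin n ⊕ Fin n}
    (h : DW n x = DW n y) : Set.range x = Set.range y := by
  have himg := Finset.geomSum_injective (n := 2) le_rfl h
  have : (didx n) '' Set.range x = (didx n) '' Set.range y := by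
    have := congrArg (fun (s : Finset ℕ) => (s : Set ℕ)) himg
    simpa only [Finset.coe_image, Finset.coe_univ, Set.image_univ,
      show (fun i => didx n (x i)) = didx n ∘ x from rfl,
      show (fun i => didx n (y i)) = didx n ∘ y from rfl, Set.range_comp] using this
  exact Set.image_injective.2 (didx_inj n) this

def Dstr (P : Set ℕ) (n : ℕ) : (LP P).Structure (Fin n ⊕ Fin n) where
  funMap := fun f _ => f.elim
  RelMap := fun {k} r v =>
    Sum.rec
      (fun s => Function.Injective (half1 s.2.2 v) ∧ Function.Injective (half2 s.2.2 v) ∧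
        Set.range (half1 s.2.2 v) = Set.range (half2 s.2.2 v))
      (fun s => Function.Injective (half1 s.2.2 v) ∧ Function.Injective (half2 s.2.2 v) ∧
        DW n (half1 s.2.2 v) < DW n (half2 s.2.2 v)) r

lemma ERelD_iff {P : Set ℕ} (n : ℕ) {m : ℕ} (hm : 0 < m) (x y : Fin m → Fin n ⊕ Fin n) :
    @ERelP P _ (Dstr P n) m hm x y ↔
      (Function.Injective x ∧ Function.Injective y ∧ Set.range x = Set.range y) := by
  show (Function.Injective (half1 rfl (Fin.append x y)) ∧
      Function.Injective (half2 rfl (Fin.append x y)) ∧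
      Set.range (half1 rfl (Fin.append x y)) = Set.range (half2 rfl (Fin.append x y))) ↔ _
  rw [half1_append, half2_append]

lemma LTRelD_iff {P : Set ℕ} (n : ℕ) {m : ℕ} (hm : m ∈ P) (x y : Fin m → Fin n ⊕ Fin n) :
    @LTRelP P _ (Dstr P n) m hm x y ↔
      (Function.Injective x ∧ Function.Injective y ∧ DW n x < DW n y) := by
  show (Function.Injective (half1 rfl (Fin.append x y)) ∧
      Function.Injective (half2 rfl (Fin.append x y)) ∧
      DW n (half1 rfl (Fin.append x y)) < DW n (half2 rfl (Fin.append x y))) ↔ _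
  rw [half1_append, half2_append]

lemma isKP_D (P : Set ℕ) (n : ℕ) : @IsKPStruct P (Fin n ⊕ Fin n) (Dstr P n) := by
  constructor
  · intro m hm
    refine ⟨fun x y h => ?_, fun x y σ τ h => ?_, fun x hx => ?_, fun x y h => ?_,
      fun x y z h1 h2 => ?_⟩
    · have := (ERelD_iff n hm x y).1 h; exact ⟨this.1, this.2.1⟩
    · obtain ⟨hx, hy, hr⟩ := (ERelD_iff n hm x y).1 h
      refine (ERelD_iff n hm _ _).2 ⟨hx.comp σ.injective, hy.comp τ.injective, ?_⟩
      rw [σ.surjective.range_comp x, τ.surjective.range_comp y]; exact hr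
    · exact (ERelD_iff n hm x x).2 ⟨hx, hx, rfl⟩
    · obtain ⟨hx, hy, hr⟩ := (ERelD_iff n hm x y).1 h
      exact (ERelD_iff n hm y x).2 ⟨hy, hx, hr.symm⟩
    · obtain ⟨hx, hy, hr⟩ := (ERelD_iff n hm x y).1 h1
      obtain ⟨_, hz, hr'⟩ := (ERelD_iff n hm y z).1 h2
      exact (ERelD_iff n hm x z).2 ⟨hx, hz, hr.trans hr'⟩
  · intro m hm hm0
    refine ⟨fun x y h => ?_, fun x x' y y' hE1 hE2 h => ?_, fun x y h => ?_,
      fun x y z h1 h2 => ?_, fun x y hx hy hne => ?_⟩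
    · have := (LTRelD_iff n hm x y).1 h; exact ⟨this.1, this.2.1⟩
    · obtain ⟨hx, hy, hr⟩ := (LTRelD_iff n hm x y).1 h
      obtain ⟨_, hx', hrx⟩ := (ERelD_iff n hm0 x x').1 hE1
      obtain ⟨_, hy', hry⟩ := (ERelD_iff n hm0 y y').1 hE2
      refine (LTRelD_iff n hm x' y').2 ⟨hx', hy', ?_⟩
      rw [← DW_range_eq n hrx, ← DW_range_eq n hry]; exact hr
    · obtain ⟨hx, hy, hr⟩ := (LTRelD_iff n hm x y).1 h
      intro hE
      obtain ⟨_, _, hre⟩ := (ERelD_iff n hm0 x y).1 hE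
      exact absurd (DW_range_eq n hre) (Nat.ne_of_lt hr)
    · obtain ⟨hx, hy, hr⟩ := (LTRelD_iff n hm x y).1 h1
      obtain ⟨_, hz, hr'⟩ := (LTRelD_iff n hm y z).1 h2
      exact (LTRelD_iff n hm x z).2 ⟨hx, hz, hr.trans hr'⟩
    · have hDW : DW n x ≠ DW n y := by
        intro hdw
        exact hne ((ERelD_iff n hm0 x y).2 ⟨hx, hy, range_eq_of_DW n hdw⟩)
      rcases hDW.lt_or_gt with h | h
      · exact Or.inl ((LTRelD_iff n hm x y).2 ⟨hx, hy, h⟩)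
      · exact Or.inr ((LTRelD_iff n hm y x).2 ⟨hy, hx, h⟩)

end Stage2

section Stage3

open Function Set

lemma DW_inl (n : ℕ) {m : ℕ} (w : Fin m → Fin n) :
    DW n (Sum.inl ∘ w) = ∑ k ∈ Finset.image (fun i => (w i : ℕ)) Finset.univ, 2 ^ k := rfl

lemma DW_inr (n : ℕ) {m : ℕ} (w : Fin m → Fin n) :
    DW n (Sum.inr ∘ w) = 2 ^ n * DW n (Sum.inl ∘ w) := by
  unfold DW
  have h1 : (Finset.image (fun i => didx n ((Sum.inr ∘ w) i)) Finset.univ)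
      = Finset.image (fun k => n + k) (Finset.image (fun i => ((w i : ℕ))) Finset.univ) := by
    rw [Finset.image_image]; rfl
  rw [h1, Finset.sum_image (by intro a _ b _ h; exact Nat.add_left_cancel h)]
  have h2 : (Finset.image (fun i => didx n ((Sum.inl ∘ w) i)) Finset.univ)
      = Finset.image (fun i => ((w i : ℕ))) Finset.univ := rfl
  rw [h2, Finset.mul_sum]
  exact Finset.sum_congr rfl (fun k _ => by rw [pow_add])

lemma swap_rel (P : Set ℕ) (n : ℕ) {k : ℕ} (r : (LP P).Relations k) (u : Fin k → Fin n) :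
    @RelMap (LP P) _ (Dstr P n) k r (Sum.inl ∘ u) ↔
      @RelMap (LP P) _ (Dstr P n) k r (Sum.inr ∘ u) := by
  rcases r with ⟨m, hm, hk⟩ | ⟨m, hm, hk⟩ <;> subst hk
  · show (Injective (Sum.inl ∘ half1 rfl u) ∧ Injective (Sum.inl ∘ half2 rfl u) ∧
        Set.range (Sum.inl ∘ half1 rfl u) = Set.range (Sum.inl ∘ half2 rfl u)) ↔
      (Injective (Sum.inr ∘ half1 rfl u) ∧ Injective (Sum.inr ∘ half2 rfl u) ∧
        Set.range (Sum.inr ∘ half1 rfl u) = Set.range (Sum.inr ∘ half2 rfl u))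
    rw [Sum.inl_injective.of_comp_iff, Sum.inl_injective.of_comp_iff,
      Sum.inr_injective.of_comp_iff, Sum.inr_injective.of_comp_iff,
      Set.range_comp, Set.range_comp, Set.range_comp, Set.range_comp,
      (Set.image_injective.2 Sum.inl_injective).eq_iff,
      (Set.image_injective.2 Sum.inr_injective).eq_iff]
  · show (Injective (Sum.inl ∘ half1 rfl u) ∧ Injective (Sum.inl ∘ half2 rfl u) ∧
        DW n (Sum.inl ∘ half1 rfl u) < DW n (Sum.inl ∘ half2 rfl u)) ↔
      (Injective (Sum.inr ∘ half1 rfl u) ∧ Injective (Sum.inr ∘ half2 rfl u) ∧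
        DW n (Sum.inr ∘ half1 rfl u) < DW n (Sum.inr ∘ half2 rfl u))
    rw [Sum.inl_injective.of_comp_iff, Sum.inl_injective.of_comp_iff,
      Sum.inr_injective.of_comp_iff, Sum.inr_injective.of_comp_iff,
      DW_inr, DW_inr, mul_lt_mul_iff_right₀ (pow_pos (by norm_num : (0:ℕ) < 2) n)]

lemma exists_embD {P : Set ℕ} {M : Type} [(LP P).Structure M]
    (hage : (LP P).age M = KP P) (n : ℕ) :
    Nonempty (@FirstOrder.Language.Embedding (LP P) (Fin n ⊕ Fin n) M (Dstr P n) _) := by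
  have hmem : (⟨Fin n ⊕ Fin n, Dstr P n⟩ : Bundled (LP P).Structure) ∈ KP P :=
    ⟨inferInstanceAs (Finite (Fin n ⊕ Fin n)), isKP_D P n⟩
  rw [← hage] at hmem
  exact hmem.2

lemma not_HEP_of_age {P : Set ℕ} {M : Type} [(LP P).Structure M]
    (hage : (LP P).age M = KP P) {n : ℕ} (hnP : n ∈ P) (hn0 : 0 < n) :
    ¬ HEP (LP P) M := by
  intro hHEP
  letI : (LP P).Structure (Fin n ⊕ Fin n) := Dstr P n
  obtain ⟨e⟩ := exists_embD hage n
  set b' : Fin n → M := fun i => e (Sum.inl i) with hb'def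
  set c' : Fin n → M := fun i => e (Sum.inr i) with hc'def
  have hb' : Function.Injective b' := e.injective.comp Sum.inl_injective
  have hc' : Function.Injective c' := e.injective.comp Sum.inr_injective
  have hW : DW n (Sum.inl : Fin n → Fin n ⊕ Fin n) < DW n (Sum.inr : Fin n → Fin n ⊕ Fin n) := by
    have h1 : DW n (Sum.inl : Fin n → Fin n ⊕ Fin n) < 2 ^ n := by
      apply Nat.geomSum_lt le_rfl
      intro k hk
      simp only [Finset.mem_image] at hk
      obtain ⟨i, -, rfl⟩ := hk
      exact i.isLt
    have h2 : 2 ^ n ≤ DW n (Sum.inr : Fin n → Fin n ⊕ Fin n) := by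
      apply Finset.single_le_sum (f := fun k => 2 ^ k) (fun _ _ => Nat.zero_le _)
      refine Finset.mem_image.2 ⟨⟨0, hn0⟩, Finset.mem_univ _, ?_⟩
      simp [didx]
    omega
  have hlt : LTRelP P M n hnP b' c' := by
    have hD : @LTRelP P _ (Dstr P n) n hnP Sum.inl Sum.inr :=
      (LTRelD_iff n hnP _ _).2 ⟨Sum.inl_injective, Sum.inr_injective, hW⟩
    unfold LTRelP
    rw [show Fin.append b' c' = ⇑e ∘ Fin.append Sum.inl Sum.inr from by
      rw [comp_append']; rfl]
    exact (e.map_rel _ _).2 hD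
  let Sb : (LP P).Substructure M := setSub (Set.range b')
  let Sc : (LP P).Substructure M := setSub (Set.range c')
  have hmemb : ∀ l, b' l ∈ Sb := fun l => ⟨l, rfl⟩
  have hmemc : ∀ l, c' l ∈ Sc := fun l => ⟨l, rfl⟩
  let eb := Equiv.ofInjective b' hb'
  let ec := Equiv.ofInjective c' hc'
  let f0 : Sb ≃ Sc :=
    { toFun := fun s => ⟨c' (eb.symm ⟨s.1, s.2⟩), Set.mem_range_self _⟩
      invFun := fun s => ⟨b' (ec.symm ⟨s.1, s.2⟩), Set.mem_range_self _⟩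
      left_inv := by
        intro s
        apply Subtype.ext
        show b' (ec.symm ⟨c' (eb.symm ⟨s.1, s.2⟩), _⟩) = s.1
        rw [show ec.symm ⟨c' (eb.symm ⟨s.1, s.2⟩), Set.mem_range_self _⟩
            = eb.symm ⟨s.1, s.2⟩ from Equiv.ofInjective_symm_apply hc' _]
        exact Equiv.apply_ofInjective_symm hb' ⟨s.1, s.2⟩
      right_inv := by
        intro s
        apply Subtype.ext
        show c' (eb.symm ⟨b' (ec.symm ⟨s.1, s.2⟩), _⟩) = s.1
        rw [show eb.symm ⟨b' (ec.symm ⟨s.1, s.2⟩), Set.mem_range_self _⟩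
            = ec.symm ⟨s.1, s.2⟩ from Equiv.ofInjective_symm_apply hb' _]
        exact Equiv.apply_ofInjective_symm hc' ⟨s.1, s.2⟩ }
  let fiso : Sb ≃[LP P] Sc :=
    { toEquiv := f0
      map_fun' := fun f _ => f.elim
      map_rel' := by
        intro k r x
        let u : Fin k → Fin n := fun i => eb.symm ⟨(x i : M), (x i).2⟩
        have hbx : (fun i => ((x i : Sb) : M)) = ⇑e ∘ (Sum.inl ∘ u) :=
          funext fun i => (Equiv.apply_ofInjective_symm hb' _).symm
        have hcx : (fun i => ((f0 (x i) : Sc) : M)) = ⇑e ∘ (Sum.inr ∘ u) := rfl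
        show RelMap r (fun i => ((f0 (x i) : Sc) : M)) ↔ RelMap r (fun i => ((x i : Sb) : M))
        rw [hbx, hcx, e.map_rel, e.map_rel]
        exact (swap_rel P n r u).symm }
  obtain ⟨F, hFfin, hS, hT, g, hg⟩ := hHEP 1 (fun _ => Sb) (fun _ => Sc)
    (fun _ => Set.finite_range b') (fun _ => Set.finite_range c') (fun _ => fiso)
  have hbF : ∀ l, b' l ∈ F := fun l => hS 0 (hmemb l)
  refine key_no_auto hage hnP hn0 F hFfin b' c' hbF hlt (g 0) (fun l => ?_)
  have h1 := hg 0 (b' l) (hmemb l)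
  have h2 : ((fiso ⟨b' l, hmemb l⟩ : Sc) : M) = c' l := by
    show c' (eb.symm ⟨b' l, _⟩) = c' l
    rw [show eb.symm ⟨b' l, hmemb l⟩ = l from Equiv.ofInjective_symm_apply hb' l]
  rw [← h2]
  exact h1

end Stage3

/-- for `n ∈ P` and pairwise disjoint injective `n`-tuples `a, b, c` lying
in pairwise distinct `E_n`-classes with `a <_n b <_n c`, the partial isomorphism fixing
`a` pointwise and sending `b` to `c` extends to an automorphism of no finite substructure
of `M`; in particular `M` does not satisfy Hrushovski's extension property. -/
theorem KP_limit_not_HEP (P : Set ℕ) (hP : ∀ n ∈ P, 3 ≤ n) (hPne : P.Nonempty)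
    (M : Type) [(LP P).Structure M] [Countable M]
    (hUH : (LP P).IsUltrahomogeneous M) (hage : (LP P).age M = KP P)
    (n : ℕ) (hnP : n ∈ P) (hn0 : 0 < n)
    (a b c : Fin n → M)
    (ha : Function.Injective a) (hb : Function.Injective b) (hc : Function.Injective c)
    (hab : Disjoint (Set.range a) (Set.range b))
    (hacd : Disjoint (Set.range a) (Set.range c))
    (hbc : Disjoint (Set.range b) (Set.range c))
    (hEab : ¬ ERelP P M n hn0 a b) (hEbc : ¬ ERelP P M n hn0 b c)
    (hEac : ¬ ERelP P M n hn0 a c)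
    (hlt1 : LTRelP P M n hnP a b) (hlt2 : LTRelP P M n hnP b c) :
    (∀ F : (LP P).Substructure M, Set.Finite (F : Set M) →
      ∀ (haF : ∀ l, a l ∈ F) (hbF : ∀ l, b l ∈ F) (_ : ∀ l, c l ∈ F),
        ¬ ∃ g : F ≃[LP P] F,
            (∀ l, g ⟨a l, haF l⟩ = ⟨a l, haF l⟩) ∧
            (∀ l, ((g ⟨b l, hbF l⟩ : F) : M) = c l)) ∧
    ¬ HEP (LP P) M := by
  constructor
  · intro F hFfin haF hbF hcF
    rintro ⟨g, hga, hgb⟩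
    exact key_no_auto hage hnP hn0 F hFfin b c hbF hlt2 g hgb
  · exact not_HEP_of_age hage hnP hn0
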